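/- Let n ≥ 3. Then Der(J₃) has dimension n² − 3n + 4. -/

import Mathlib

noncomputable section

abbrev V (n : ℕ) : Type := Fin n → ℂ

abbrev Bil (n : ℕ) : Type := V n →ₗ[ℂ] V n →ₗ[ℂ] V n

instance BilTop (n : ℕ) : TopologicalSpace (Bil n) :=
  TopologicalSpace.induced (fun μ : Bil n => fun x y : V n => μ x y) inferInstance

/-- The change-of-basis action of a linear automorphism on multiplications. -/
def act {n : ℕ} (g : V n ≃ₗ[ℂ] V n) (μ : Bil n) : Bil n :=
  LinearMap.mk₂ ℂ (fun x y => g (μ (g.symm x) (g.symm y)))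
    (fun x x' y => by simp)
    (fun c x y => by simp)
    (fun x y y' => by simp)
    (fun c x y => by simp)

/-- The orbit of a multiplication under the change-of-basis action. -/
def orb {n : ℕ} (μ : Bil n) : Set (Bil n) :=
  Set.range fun g : V n ≃ₗ[ℂ] V n => act g μ

/-- Two multiplications are isomorphic iff they lie in the same orbit. -/
def Isom {n : ℕ} (μ ν : Bil n) : Prop := ∃ g : V n ≃ₗ[ℂ] V n, act g μ = ν

def levelOne {n : ℕ} (lam : Bil n) : Prop :=
  lam ≠ 0 ∧ closure (orb lam) ⊆ orb lam ∪ {0}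

def levelTwo {n : ℕ} (lam : Bil n) : Prop :=
  (∀ μ ∈ closure (orb lam) \ orb lam, closure (orb μ) ⊆ orb μ ∪ {0}) ∧
  ∃ μ ∈ closure (orb lam) \ orb lam, μ ≠ 0

/-- `E n k` is the standard basis vector `e_{k+1}` of `ℂⁿ` (0-indexed `k`). -/
def E (n k : ℕ) : V n := fun m => if (m : ℕ) = k then 1 else 0

/-- The bilinear multiplication determined by a table of products of basis vectors. -/
def ofTable {n : ℕ} (c : Fin n → Fin n → V n) : Bil n :=
  LinearMap.mk₂ ℂ (fun x y => ∑ i : Fin n, ∑ j : Fin n, (x i * y j) • c i j)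
    (fun x x' y => by
      simp [add_mul, add_smul, Finset.sum_add_distrib])
    (fun a x y => by
      simp [Finset.smul_sum, smul_smul, mul_assoc])
    (fun x y y' => by
      simp [mul_add, add_smul, Finset.sum_add_distrib])
    (fun a x y => by
      simp [Finset.smul_sum, smul_smul, mul_assoc, mul_left_comm])

def JordanMul {n : ℕ} (lam : Bil n) : Prop :=
  (∀ x y : V n, lam x y = lam y x) ∧
  ∀ x y : V n, lam (lam x x) (lam y x) = lam (lam (lam x x) y) x

def LieMul {n : ℕ} (lam : Bil n) : Prop :=
  (∀ x : V n, lam x x = 0) ∧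
  ∀ x y z : V n, lam x (lam y z) + lam y (lam z x) + lam z (lam x y) = 0

def AssocMul {n : ℕ} (lam : Bil n) : Prop :=
  ∀ x y z : V n, lam (lam x y) z = lam x (lam y z)
/-- The space of derivations of a multiplication. -/
def Der {n : ℕ} (lam : Bil n) : Submodule ℂ (Module.End ℂ (V n)) where
  carrier := { D | ∀ x y : V n, D (lam x y) = lam (D x) y + lam x (D y) }
  add_mem' := by
    intro a b ha hb x y
    simp only [LinearMap.add_apply, ha x y, hb x y, map_add, LinearMap.add_apply]
    abel
  zero_mem' := by intro x y; simp
  smul_mem' := by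
    intro c a ha x y
    simp only [LinearMap.smul_apply, ha x y, map_smul, smul_add, LinearMap.smul_apply]

/-- `I` is an abelian ideal of the (Lie) multiplication `lam`. -/
def IsAbelianIdeal {n : ℕ} (lam : Bil n) (I : Submodule ℂ (V n)) : Prop :=
  (∀ x : V n, ∀ v ∈ I, lam x v ∈ I) ∧ ∀ v ∈ I, ∀ w ∈ I, lam v w = 0
/-- `J₁`: `e₁·e₁ = e₁`. -/
def J1 (n : ℕ) : Bil n :=
  ofTable fun i j => if i.val = 0 ∧ j.val = 0 then E n 0 else 0

/-- `J₂`: `e₁·e₁ = e₁`, `e₁·eᵢ = eᵢ·e₁ = eᵢ` for `2 ≤ i ≤ n`. -/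
def J2 (n : ℕ) : Bil n :=
  ofTable fun i j =>
    if i.val = 0 then E n j.val else if j.val = 0 then E n i.val else 0

/-- `J₃`: `e₁·e₂ = e₂·e₁ = e₃`. -/
def J3 (n : ℕ) : Bil n :=
  ofTable fun i j =>
    if (i.val = 0 ∧ j.val = 1) ∨ (i.val = 1 ∧ j.val = 0) then E n 2 else 0

section DerJ3Aux

variable {n : ℕ}

lemma V_eq_sum (x : V n) : x = ∑ j : Fin n, x j • E n (j : ℕ) := by
  funext m
  simp only [Finset.sum_apply, Pi.smul_apply, E, smul_eq_mul]
  rw [Finset.sum_eq_single m]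
  · simp
  · intro b _ hb
    rw [if_neg (fun h => hb (Fin.ext h.symm))]
    ring
  · simp

lemma sum_eq_add_aux {α M : Type*} [AddCommMonoid M] [DecidableEq α] {s : Finset α}
    {f : α → M} {a b : α} (ha : a ∈ s) (hb : b ∈ s) (hab : a ≠ b)
    (h : ∀ c ∈ s, c ≠ a → c ≠ b → f c = 0) : ∑ x ∈ s, f x = f a + f b := by
  rw [← Finset.sum_subset (s₁ := {a, b}) (by
      intro c hc
      simp only [Finset.mem_insert, Finset.mem_singleton] at hc
      rcases hc with rfl | rfl <;> assumption)
    (fun c hc hc2 => h c hc (by simp_all) (by simp_all))]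
  rw [Finset.sum_pair hab]

lemma J3_apply (hn : 3 ≤ n) (x y : V n) :
    J3 n x y = (x ⟨0, by omega⟩ * y ⟨1, by omega⟩ + x ⟨1, by omega⟩ * y ⟨0, by omega⟩) • E n 2 := by
  classical
  simp only [J3, ofTable, LinearMap.mk₂_apply]
  rw [← Finset.sum_product']
  rw [sum_eq_add_aux (a := ((⟨0, by omega⟩ : Fin n), (⟨1, by omega⟩ : Fin n)))
    (b := ((⟨1, by omega⟩ : Fin n), (⟨0, by omega⟩ : Fin n))) (by simp) (by simp)
    (by simp [Prod.ext_iff, Fin.ext_iff])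
    (by
      rintro ⟨i, j⟩ _ hc1 hc2
      have hcond : ¬(((i : ℕ) = 0 ∧ (j : ℕ) = 1) ∨ ((i : ℕ) = 1 ∧ (j : ℕ) = 0)) := by
        rintro (⟨h1, h2⟩ | ⟨h1, h2⟩)
        · exact hc1 (Prod.ext (Fin.ext h1) (Fin.ext h2))
        · exact hc2 (Prod.ext (Fin.ext h1) (Fin.ext h2))
      rw [if_neg hcond, smul_zero])]
  rw [if_pos (by simp), if_pos (by simp)]
  rw [add_smul]

lemma apply_eq_sum (D : Module.End ℂ (V n)) (x : V n) (i : Fin n) :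
    D x i = ∑ j : Fin n, D (E n (j : ℕ)) i * x j := by
  conv_lhs => rw [V_eq_sum x, map_sum]
  simp only [Finset.sum_apply, map_smul, Pi.smul_apply, smul_eq_mul]
  exact Finset.sum_congr rfl fun j _ => mul_comm _ _

lemma mem_der_iff (hn : 3 ≤ n) (D : Module.End ℂ (V n)) :
    D ∈ Der (J3 n) ↔
      D (E n 2) = (D (E n 0) ⟨0, by omega⟩ + D (E n 1) ⟨1, by omega⟩) • E n 2 ∧
      (∀ x : V n, D x ⟨0, by omega⟩ = D (E n 0) ⟨0, by omega⟩ * x ⟨0, by omega⟩) ∧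
      (∀ x : V n, D x ⟨1, by omega⟩ = D (E n 1) ⟨1, by omega⟩ * x ⟨1, by omega⟩) := by
  have hmem : D ∈ Der (J3 n) ↔ ∀ x y : V n,
      D (J3 n x y) = J3 n (D x) y + J3 n x (D y) := Iff.rfl
  rw [hmem]
  set i0 : Fin n := ⟨0, by omega⟩ with hi0
  set i1 : Fin n := ⟨1, by omega⟩ with hi1
  set i2 : Fin n := ⟨2, by omega⟩ with hi2
  have hE : ∀ k : ℕ, ∀ m : Fin n, E n k m = if (m : ℕ) = k then 1 else 0 := fun _ _ => rfl
  constructor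
  · intro hD
    have hd : ∀ x y : V n, (x i0 * y i1 + x i1 * y i0) • D (E n 2) =
        ((D x) i0 * y i1 + (D x) i1 * y i0) • E n 2 +
        (x i0 * (D y) i1 + x i1 * (D y) i0) • E n 2 := by
      intro x y
      have h := hD x y
      rw [J3_apply hn x y, J3_apply hn (D x) y, J3_apply hn x (D y), map_smul] at h
      exact h
    -- auxiliary vanishing
    have hde0 : D (E n 0) i1 = 0 := by
      have h := congrFun (hd (E n 0) (E n 0)) i2
      simp [hE, hi0, hi1, hi2] at h
      linear_combination (norm := (rw [hi1]; ring1)) -h/2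
    have hde1 : D (E n 1) i0 = 0 := by
      have h := congrFun (hd (E n 1) (E n 1)) i2
      simp [hE, hi0, hi1, hi2] at h
      linear_combination (norm := (rw [hi0]; ring1)) -h/2
    have h01 : D (E n 2) = (D (E n 0) i0 + D (E n 1) i1) • E n 2 := by
      have h := hd (E n 0) (E n 1)
      simp [hE, hi0, hi1] at h
      rw [h, ← add_smul]
    refine ⟨h01, ?_, ?_⟩
    · intro x
      have h := congrFun (hd x (E n 1)) i2
      rw [h01] at h
      simp [hE, hi0, hi1, hi2, hde1] at h
      linear_combination (norm := (rw [hi0, hi1]; ring1)) -h - x i1 * hde1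
    · intro x
      have h := congrFun (hd x (E n 0)) i2
      rw [h01] at h
      simp [hE, hi0, hi1, hi2, hde0] at h
      linear_combination (norm := (rw [hi0, hi1]; ring1)) -h - x i0 * hde0
  · rintro ⟨h2, h0, h1⟩ x y
    rw [J3_apply hn x y, J3_apply hn (D x) y, J3_apply hn x (D y), map_smul, h2,
      h0 x, h1 x, h0 y, h1 y]
    rw [smul_smul, ← add_smul]
    congr 1
    ring

abbrev Sset (n : ℕ) : Type := {p : Fin n × Fin n // 2 ≤ p.1.val ∧ p.2.val ≠ 2}

abbrev Wspace (n : ℕ) : Type := ℂ × ℂ × (Sset n → ℂ)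

def Mmat (w : Wspace n) : Matrix (Fin n) (Fin n) ℂ := fun i j =>
  if h : 2 ≤ i.val ∧ j.val ≠ 2 then w.2.2 ⟨(i, j), h⟩
  else if i.val = 0 ∧ j.val = 0 then w.1
  else if i.val = 1 ∧ j.val = 1 then w.2.1
  else if i.val = 2 ∧ j.val = 2 then w.1 + w.2.1
  else 0

lemma Mmat_add (w w' : Wspace n) : Mmat (w + w') = Mmat w + Mmat w' := by
  funext i j
  simp only [Mmat, Matrix.add_apply]
  split_ifs <;> simp <;> ring

lemma Mmat_smul (c : ℂ) (w : Wspace n) : Mmat (c • w) = c • Mmat w := by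
  funext i j
  simp only [Mmat, Matrix.smul_apply]
  split_ifs <;> simp [mul_add]

def Gmap (n : ℕ) : Wspace n →ₗ[ℂ] Module.End ℂ (V n) where
  toFun w := Matrix.mulVecLin (Mmat w)
  map_add' w w' := by
    show (Mmat (w + w')).mulVecLin = (Mmat w).mulVecLin + (Mmat w').mulVecLin
    rw [Mmat_add, Matrix.mulVecLin_add]
  map_smul' c w := by
    show (Mmat (c • w)).mulVecLin = c • (Mmat w).mulVecLin
    rw [Mmat_smul]
    apply LinearMap.ext
    intro x
    simp [Matrix.mulVecLin_apply, Matrix.smul_mulVec]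

lemma mulVec_E (M : Matrix (Fin n) (Fin n) ℂ) (k : Fin n) :
    M.mulVec (E n (k : ℕ)) = fun i => M i k := by
  funext i
  simp only [Matrix.mulVec, dotProduct, E]
  rw [Finset.sum_eq_single k]
  · simp
  · intro b _ hb
    rw [if_neg (fun h => hb (Fin.ext h)), mul_zero]
  · simp

lemma Gmap_apply_E (w : Wspace n) (k : Fin n) :
    Gmap n w (E n (k : ℕ)) = fun i => Mmat w i k := by
  exact mulVec_E _ k

lemma Mmat_entry0 (w : Wspace n) (h0 : 0 < n) (j : Fin n) :
    Mmat w ⟨0, h0⟩ j = if (j : ℕ) = 0 then w.1 else 0 := by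
  simp only [Mmat]
  rw [dif_neg (by simp)]
  split_ifs <;> first | rfl | omega | simp_all

lemma Mmat_entry1 (w : Wspace n) (h1 : 1 < n) (j : Fin n) :
    Mmat w ⟨1, h1⟩ j = if (j : ℕ) = 1 then w.2.1 else 0 := by
  simp only [Mmat]
  rw [dif_neg (by simp)]
  split_ifs <;> first | rfl | omega | simp_all

lemma Mmat_col2 (w : Wspace n) (h2 : 2 < n) (i : Fin n) :
    Mmat w i ⟨2, h2⟩ = if (i : ℕ) = 2 then w.1 + w.2.1 else 0 := by
  simp only [Mmat]
  rw [dif_neg (by simp)]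
  split_ifs <;> first | rfl | omega | simp_all

lemma Gmap_apply (w : Wspace n) (x : V n) (i : Fin n) :
    Gmap n w x i = ∑ j : Fin n, Mmat w i j * x j := rfl

lemma Gmap_mem_der (hn : 3 ≤ n) (w : Wspace n) : Gmap n w ∈ Der (J3 n) := by
  rw [mem_der_iff hn]
  have key0 : ∀ x : V n, Gmap n w x ⟨0, by omega⟩ = w.1 * x ⟨0, by omega⟩ := by
    intro x
    rw [Gmap_apply]
    rw [Finset.sum_eq_single (⟨0, by omega⟩ : Fin n)]
    · rw [Mmat_entry0, if_pos rfl]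
    · intro b _ hb
      rw [Mmat_entry0, if_neg (fun h => hb (Fin.ext h)), zero_mul]
    · simp
  have key1 : ∀ x : V n, Gmap n w x ⟨1, by omega⟩ = w.2.1 * x ⟨1, by omega⟩ := by
    intro x
    rw [Gmap_apply]
    rw [Finset.sum_eq_single (⟨1, by omega⟩ : Fin n)]
    · rw [Mmat_entry1, if_pos rfl]
    · intro b _ hb
      rw [Mmat_entry1, if_neg (fun h => hb (Fin.ext h)), zero_mul]
    · simp
  have hv0 : Gmap n w (E n 0) ⟨0, by omega⟩ = w.1 := by
    rw [key0 (E n 0)]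
    simp [E]
  have hv1 : Gmap n w (E n 1) ⟨1, by omega⟩ = w.2.1 := by
    rw [key1 (E n 1)]
    simp [E]
  refine ⟨?_, fun x => by rw [key0 x, hv0], fun x => by rw [key1 x, hv1]⟩
  have hGE2 : Gmap n w (E n 2) = fun i => Mmat w i ⟨2, by omega⟩ :=
    Gmap_apply_E w ⟨2, by omega⟩
  rw [hGE2, hv0, hv1]
  funext i
  rw [Mmat_col2]
  by_cases hi : (i : ℕ) = 2 <;> simp [E, hi]

lemma Gmap_inj (hn : 3 ≤ n) : Function.Injective (Gmap n) := by
  intro w w' h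
  have hM : ∀ i j : Fin n, Mmat w i j = Mmat w' i j := by
    intro i j
    have h1 : Gmap n w (E n (j : ℕ)) = Gmap n w' (E n (j : ℕ)) := by rw [h]
    have h2 := (Gmap_apply_E w j).symm.trans (h1.trans (Gmap_apply_E w' j))
    exact congrFun h2 i
  obtain ⟨a, b, f⟩ := w
  obtain ⟨a', b', f'⟩ := w'
  simp only [Prod.mk.injEq]
  refine ⟨?_, ?_, ?_⟩
  · have := hM ⟨0, by omega⟩ ⟨0, by omega⟩
    rw [Mmat_entry0, Mmat_entry0, if_pos rfl, if_pos rfl] at this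
    exact this
  · have := hM ⟨1, by omega⟩ ⟨1, by omega⟩
    rw [Mmat_entry1, Mmat_entry1, if_pos rfl, if_pos rfl] at this
    exact this
  · funext p
    obtain ⟨⟨i, j⟩, hp⟩ := p
    have := hM i j
    simp only [Mmat] at this
    rw [dif_pos hp, dif_pos hp] at this
    exact this

lemma range_Gmap (hn : 3 ≤ n) : LinearMap.range (Gmap n) = Der (J3 n) := by
  apply le_antisymm
  · rintro D ⟨w, rfl⟩
    exact Gmap_mem_der hn w
  · intro D hD
    obtain ⟨hc2, hc0, hc1⟩ := (mem_der_iff hn D).1 hD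
    refine ⟨(D (E n 0) ⟨0, by omega⟩, D (E n 1) ⟨1, by omega⟩,
      fun p => D (E n (p.val.2 : ℕ)) p.val.1), ?_⟩
    have key : ∀ i j : Fin n,
        Mmat (D (E n 0) ⟨0, by omega⟩, D (E n 1) ⟨1, by omega⟩,
          fun p => D (E n (p.val.2 : ℕ)) p.val.1) i j = D (E n (j : ℕ)) i := by
      intro i j
      by_cases hij : 2 ≤ (i : ℕ) ∧ (j : ℕ) ≠ 2
      · simp only [Mmat]
        rw [dif_pos hij]
      · by_cases hi0 : (i : ℕ) = 0
        · have hi : i = ⟨0, by omega⟩ := Fin.ext hi0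
          rw [hi, Mmat_entry0, hc0 (E n (j : ℕ))]
          by_cases hj : (j : ℕ) = 0 <;> simp [E, hj, eq_comm]
        · by_cases hi1 : (i : ℕ) = 1
          · have hi : i = ⟨1, by omega⟩ := Fin.ext hi1
            rw [hi, Mmat_entry1, hc1 (E n (j : ℕ))]
            by_cases hj : (j : ℕ) = 1 <;> simp [E, hj, eq_comm]
          · have hi2 : 2 ≤ (i : ℕ) := by omega
            have hj : (j : ℕ) = 2 := by tauto
            have hj' : j = ⟨2, by omega⟩ := Fin.ext hj
            rw [hj', Mmat_col2]
            have hE2 : E n (((⟨2, by omega⟩ : Fin n)) : ℕ) = E n 2 := rfl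
            rw [hE2, hc2]
            by_cases hi : (i : ℕ) = 2 <;> simp [E, hi]
    apply LinearMap.ext
    intro x
    funext i
    rw [Gmap_apply, apply_eq_sum D x i]
    exact Finset.sum_congr rfl fun j _ => by rw [key i j]

lemma card_Sset (hn : 3 ≤ n) : Fintype.card (Sset n) = (n - 2) * (n - 1) := by
  classical
  rw [Fintype.card_subtype]
  have huniv : (Finset.univ : Finset (Fin n × Fin n)) =
      (Finset.univ : Finset (Fin n)) ×ˢ (Finset.univ : Finset (Fin n)) :=
    Finset.univ_product_univ.symm
  rw [huniv]
  rw [show (Finset.filter (fun p : Fin n × Fin n => 2 ≤ (p.1 : ℕ) ∧ (p.2 : ℕ) ≠ 2)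
        (Finset.univ ×ˢ Finset.univ)) =
      (Finset.univ.filter fun i : Fin n => 2 ≤ (i : ℕ)) ×ˢ
        (Finset.univ.filter fun j : Fin n => (j : ℕ) ≠ 2) from by
    ext ⟨a, b⟩
    simp]
  rw [Finset.card_product]
  have hA : (Finset.univ.filter fun i : Fin n => 2 ≤ (i : ℕ)).card = n - 2 := by
    have hc := Finset.card_filter_add_card_filter_not
      (s := (Finset.univ : Finset (Fin n))) (p := fun i => 2 ≤ (i : ℕ))
    have hneg : (Finset.univ.filter fun i : Fin n => ¬ 2 ≤ (i : ℕ)).card = 2 := by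
      have he : (Finset.univ.filter fun i : Fin n => ¬ 2 ≤ (i : ℕ)) =
          {⟨0, by omega⟩, ⟨1, by omega⟩} := by
        ext i
        simp [Fin.ext_iff]
        omega
      rw [he, Finset.card_insert_of_notMem (by simp [Fin.ext_iff]), Finset.card_singleton]
    rw [Finset.card_univ, Fintype.card_fin] at hc
    omega
  have hB : (Finset.univ.filter fun j : Fin n => (j : ℕ) ≠ 2).card = n - 1 := by
    have hc := Finset.card_filter_add_card_filter_not
      (s := (Finset.univ : Finset (Fin n))) (p := fun j => (j : ℕ) ≠ 2)
    have hneg : (Finset.univ.filter fun j : Fin n => ¬ (j : ℕ) ≠ 2).card = 1 := by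
      have he : (Finset.univ.filter fun j : Fin n => ¬ (j : ℕ) ≠ 2) =
          {⟨2, by omega⟩} := by
        ext j
        simp [Fin.ext_iff]
      rw [he, Finset.card_singleton]
    rw [Finset.card_univ, Fintype.card_fin] at hc
    omega
  rw [hA, hB]

end DerJ3Aux

/-- dimension of the derivation algebra of `J₃`. -/
theorem der_J3 (n : ℕ) (hn : 3 ≤ n) :
    Module.finrank ℂ (Der (J3 n)) = n ^ 2 - 3 * n + 4 := by
  rw [← range_Gmap hn, LinearMap.finrank_range_of_inj (Gmap_inj hn)]
  have hW : Module.finrank ℂ (Wspace n) = 1 + (1 + Fintype.card (Sset n)) := by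
    rw [Module.finrank_prod, Module.finrank_prod, Module.finrank_self, Module.finrank_pi]
  rw [hW, card_Sset hn]
  obtain ⟨m, rfl⟩ : ∃ m, n = m + 3 := ⟨n - 3, by omega⟩
  have h1 : (m + 3) ^ 2 = m * m + 6 * m + 9 := by ring
  have h2 : (m + 3 - 2) * (m + 3 - 1) = m * m + 3 * m + 2 := by
    have e1 : m + 3 - 2 = m + 1 := by omega
    have e2 : m + 3 - 1 = m + 2 := by omega
    rw [e1, e2]; ring
  rw [h1, h2]
  omega
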